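/- arXiv:1706.04229 — 4 statements merged into one kernel-verified Lean document; each statement's English description precedes it below -/
import Mathlib

section
/- Let X_1,...,X_m be random variables with X_i = b on event E_i and X_i = a on E_i^c, where 0 < a < b. For a k-element subset S, the expected log return V(S) = E[ln(∑_{i∈S} X_i / k)] satisfies V(S) = ln(a) + ∑_{q=1}^{k} P(Y_q(S)) · ln(1 + (b−a)/((q−1)b + (k−q+1)a)), where Y_q(S) is the event that at least q of the events {E_i : i ∈ S} occur. -/
open MeasureTheory
open scoped Classical

/-- Expansion of the expected log return:
`V(S) = ln a + ∑_{q=1}^k P(Y_q(S)) ln(1 + (b-a)/((q-1)b + (k-q+1)a))`,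
where `Y_q(S)` is the event that at least `q` of the events `{E_i : i ∈ S}` occur. -/
theorem log_return_formula {Ω : Type*} [MeasurableSpace Ω] (μ : Measure Ω)
    [IsProbabilityMeasure μ] {m : ℕ} (E : Fin m → Set Ω)
    (hE : ∀ i, MeasurableSet (E i))
    (a b : ℝ) (ha : 0 < a) (hab : a < b)
    (S : Finset (Fin m)) (k : ℕ) (hk : S.card = k) (hkpos : 0 < k) :
    (∫ ω, Real.log ((∑ i ∈ S, (if ω ∈ E i then b else a)) / k) ∂μ)
      = Real.log a + ∑ q ∈ Finset.Icc 1 k,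
          (μ {ω | q ≤ (S.filter fun i => ω ∈ E i).card}).toReal *
            Real.log (1 + (b - a) / (((q : ℝ) - 1) * b + ((k : ℝ) - q + 1) * a)) := by
  classical
  have hb : 0 < b := ha.trans hab
  set N : Ω → ℕ := fun ω => (S.filter fun i => ω ∈ E i).card with hN
  have hNle : ∀ ω, N ω ≤ k := fun ω => hk ▸ Finset.card_filter_le _ _
  have hNm : Measurable N := by
    have hNeq : N = fun ω => ∑ i ∈ S, if ω ∈ E i then 1 else 0 := by
      funext ω; exact Finset.card_filter _ _
    rw [hNeq]
    exact Finset.measurable_sum _ fun i _ =>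
      Measurable.ite (hE i) measurable_const measurable_const
  have hA : ∀ q : ℕ, MeasurableSet {ω | q ≤ N ω} :=
    fun q => measurableSet_le measurable_const hNm
  set G : ℝ → ℝ := fun x => x * b + ((k:ℝ) - x) * a with hG
  have hGpos : ∀ x : ℝ, 0 ≤ x → x ≤ k → 0 < G x := by
    intro x hx hxk
    have hk0 : (0:ℝ) < k := by exact_mod_cast hkpos
    have h1 : x * a ≤ x * b := mul_le_mul_of_nonneg_left hab.le hx
    simp only [hG]
    nlinarith [mul_pos hk0 ha]
  set c : ℕ → ℝ := fun q =>
    Real.log (1 + (b - a) / (((q : ℝ) - 1) * b + ((k : ℝ) - q + 1) * a)) with hc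
  set F : ℕ → ℝ := fun j => Real.log (G j) with hF
  have hGnat : ∀ j : ℕ, j ≤ k → 0 < G j := by
    intro j hj
    exact hGpos j (by positivity) (by exact_mod_cast hj)
  have hstep : ∀ i : ℕ, i + 1 ≤ k → c (i + 1) = F (i + 1) - F i := by
    intro i hi
    have hGi : 0 < G i := hGnat i (by omega)
    have hGi1 : 0 < G ((i:ℝ) + 1) := by
      have := hGnat (i+1) hi
      push_cast at this
      exact this
    simp only [hc, hF]
    push_cast
    have e1 : ((i:ℝ) + 1 - 1) * b + ((k:ℝ) - ((i:ℝ) + 1) + 1) * a = G (i:ℝ) := by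
      simp only [hG]; ring
    rw [e1]
    have e2 : 1 + (b - a) / G (i:ℝ) = G ((i:ℝ) + 1) / G (i:ℝ) := by
      have h3 : G ((i:ℝ) + 1) = G (i:ℝ) + (b - a) := by simp only [hG]; ring
      rw [h3]
      field_simp
    rw [e2, Real.log_div hGi1.ne' hGi.ne']
  have hF0 : F 0 = Real.log k + Real.log a := by
    have h0 : G ((0:ℕ):ℝ) = (k:ℝ) * a := by simp [hG]
    simp only [hF, h0]
    rw [Real.log_mul (by exact_mod_cast hkpos.ne') ha.ne']
  -- telescoping sum
  have htel : ∀ n : ℕ, n ≤ k → ∑ q ∈ Finset.Icc 1 n, c q = F n - F 0 := by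
    intro n hn
    induction n with
    | zero => simp
    | succ n ih =>
      rw [Finset.sum_Icc_succ_top (by omega), ih (by omega), hstep n hn]
      ring
  -- pointwise identity
  have hsum : ∀ ω, (∑ i ∈ S, (if ω ∈ E i then b else a)) = G (N ω) := by
    intro ω
    rw [Finset.sum_ite, Finset.sum_const, Finset.sum_const]
    have h2 : N ω + (S.filter fun i => ¬ ω ∈ E i).card = k := by
      rw [hN, ← hk]
      exact Finset.card_filter_add_card_filter_not _
    have hcard : (S.filter fun i => ¬ ω ∈ E i).card = k - N ω := by omega
    rw [hcard]
    have hcast : ((k - N ω : ℕ) : ℝ) = (k:ℝ) - N ω := by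
      have := hNle ω
      push_cast [Nat.cast_sub this]
      ring
    simp only [hG, nsmul_eq_mul, hcast]
    rfl
  have key : ∀ ω, Real.log ((∑ i ∈ S, (if ω ∈ E i then b else a)) / k)
      = Real.log a + ∑ q ∈ Finset.Icc 1 k,
          Set.indicator {ω' | q ≤ N ω'} (fun _ => c q) ω := by
    intro ω
    have hn := hNle ω
    have hrhs : ∑ q ∈ Finset.Icc 1 k, Set.indicator {ω' | q ≤ N ω'} (fun _ => c q) ω
        = ∑ q ∈ Finset.Icc 1 (N ω), c q := by
      have hind : ∀ q, Set.indicator {ω' | q ≤ N ω'} (fun _ => c q) ω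
          = if q ≤ N ω then c q else 0 := by
        intro q; by_cases h : q ≤ N ω <;> simp [Set.indicator, h]
      simp only [hind]
      rw [← Finset.sum_filter]
      congr 1
      ext q
      simp only [Finset.mem_filter, Finset.mem_Icc]
      omega
    rw [hrhs, htel (N ω) hn, hF0, hsum ω,
      Real.log_div (ne_of_gt (hGnat _ hn)) (by exact_mod_cast hkpos.ne')]
    simp only [hF]
    ring
  simp only [key]
  have hint : Integrable (fun ω => ∑ q ∈ Finset.Icc 1 k,
      Set.indicator {ω' | q ≤ N ω'} (fun _ => c q) ω) μ :=
    integrable_finset_sum _ fun q _ => (integrable_const (c q)).indicator (hA q)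
  rw [integral_add (integrable_const _) hint, integral_const,
    integral_finset_sum _ fun q _ => (integrable_const (c q)).indicator (hA q)]
  simp only [probReal_univ, one_smul]
  congr 1
  refine Finset.sum_congr rfl fun q _ => ?_
  rw [integral_indicator_const _ (hA q), smul_eq_mul, measureReal_def]
end

section
/- If events E_1,...,E_m are mutually independent with p_1 ≥ p_2 ≥ ... ≥ p_m, then for each q ∈ [k] the set S = {1,...,k} maximizes P(Y_q(S)) over all k-element subsets S ⊆ [m], where Y_q(S) is the event that at least q of the events {E_i : i ∈ S} occur. -/
open MeasureTheory ProbabilityTheory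
open scoped Classical

section Aux

variable {Ω : Type*} [MeasurableSpace Ω] {μ : Measure Ω} {m : ℕ} {E : Fin m → Set Ω}

private lemma cnt_eq_sum (A : Finset (Fin m)) (ω : Ω) :
    (A.filter fun i => ω ∈ E i).card = ∑ i ∈ A, if ω ∈ E i then 1 else 0 :=
  Finset.card_filter _ _

private lemma measurable_cnt_sup (A : Finset (Fin m)) :
    Measurable[⨆ i ∈ (A : Set (Fin m)), MeasurableSpace.generateFrom {E i}]
      (fun ω => (A.filter fun i => ω ∈ E i).card) := by
  have h : (fun ω => (A.filter fun i => ω ∈ E i).card)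
      = fun ω => ∑ i ∈ A, if ω ∈ E i then 1 else 0 := by
    funext ω; exact cnt_eq_sum A ω
  rw [h]
  refine Finset.measurable_sum _ (fun i hi => ?_)
  have hEi : MeasurableSet[⨆ i ∈ (A : Set (Fin m)), MeasurableSpace.generateFrom {E i}]
      (E i) := by
    have hle := le_biSup (fun i : Fin m => MeasurableSpace.generateFrom {E i})
      (Finset.mem_coe.mpr hi)
    exact hle _ (MeasurableSpace.measurableSet_generateFrom rfl)
  exact Measurable.ite hEi measurable_const measurable_const

private lemma measurable_cnt (hE : ∀ i, MeasurableSet (E i)) (A : Finset (Fin m)) :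
    Measurable (fun ω => (A.filter fun i => ω ∈ E i).card) := by
  have hle : (⨆ i ∈ (A : Set (Fin m)), MeasurableSpace.generateFrom {E i})
      ≤ ‹MeasurableSpace Ω› := by
    refine iSup_le fun i => iSup_le fun _ => MeasurableSpace.generateFrom_le ?_
    rintro t rfl
    exact hE i
  exact (measurable_cnt_sup A).mono hle le_rfl

private lemma indep_inter (hE : ∀ i, MeasurableSet (E i)) (hindep : iIndepSet E μ)
    {A : Finset (Fin m)} {j : Fin m} (hj : j ∉ A) {T : Set Ω}
    (hT : MeasurableSet[⨆ i ∈ (A : Set (Fin m)), MeasurableSpace.generateFrom {E i}] T) :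
    μ (T ∩ E j) = μ T * μ (E j) := by
  have hii : iIndep (fun i => MeasurableSpace.generateFrom {E i}) μ :=
    (iIndepSet_iff_iIndep E μ).1 hindep
  have h_le : ∀ i, MeasurableSpace.generateFrom {E i} ≤ ‹MeasurableSpace Ω› := by
    intro i
    refine MeasurableSpace.generateFrom_le ?_
    rintro t rfl
    exact hE i
  have hInd := indep_biSup_compl h_le hii (A : Set (Fin m))
  have hEj : MeasurableSet[⨆ i ∈ ((A : Set (Fin m)))ᶜ, MeasurableSpace.generateFrom {E i}]
      (E j) := by
    have hjc : j ∈ ((A : Set (Fin m)))ᶜ := by simpa using hj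
    have hle := le_biSup (fun i : Fin m => MeasurableSpace.generateFrom {E i}) hjc
    exact hle _ (MeasurableSpace.measurableSet_generateFrom rfl)
  exact (Indep_iff _ _ _).1 hInd T (E j) hT hEj

/-- Key decomposition: tail probability after inserting one more event. -/
private lemma tail_insert (hE : ∀ i, MeasurableSet (E i)) (hindep : iIndepSet E μ)
    {A : Finset (Fin m)} {j : Fin m} (hj : j ∉ A) {q : ℕ} (hq : 1 ≤ q) :
    μ {ω | q ≤ ((insert j A).filter fun i => ω ∈ E i).card} =
      μ {ω | q ≤ (A.filter fun i => ω ∈ E i).card} +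
        μ {ω | (A.filter fun i => ω ∈ E i).card = q - 1} * μ (E j) := by
  have hcnt : ∀ ω, ((insert j A).filter fun i => ω ∈ E i).card
      = (A.filter fun i => ω ∈ E i).card + (if ω ∈ E j then 1 else 0) := by
    intro ω
    rw [Finset.filter_insert]
    split_ifs with h
    · rw [Finset.card_insert_of_notMem (fun hc => hj (Finset.mem_of_mem_filter _ hc))]
    · exact rfl
  have hset : {ω | q ≤ ((insert j A).filter fun i => ω ∈ E i).card}
      = {ω | q ≤ (A.filter fun i => ω ∈ E i).card} ∪
        ({ω | (A.filter fun i => ω ∈ E i).card = q - 1} ∩ E j) := by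
    ext ω
    simp only [Set.mem_setOf_eq, Set.mem_union, Set.mem_inter_iff, hcnt ω]
    by_cases h : ω ∈ E j <;> simp [h] <;> omega
  have hmeasA : Measurable (fun ω => (A.filter fun i => ω ∈ E i).card) := measurable_cnt hE A
  have hm2 : MeasurableSet ({ω | (A.filter fun i => ω ∈ E i).card = q - 1} ∩ E j) :=
    (hmeasA (measurableSet_singleton (q - 1))).inter (hE j)
  have hdisj : Disjoint {ω | q ≤ (A.filter fun i => ω ∈ E i).card}
      ({ω | (A.filter fun i => ω ∈ E i).card = q - 1} ∩ E j) := by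
    rw [Set.disjoint_left]
    rintro ω h1 ⟨h2, -⟩
    simp only [Set.mem_setOf_eq] at h1 h2
    omega
  rw [hset, measure_union hdisj hm2]
  congr 1
  refine indep_inter hE hindep hj ?_
  exact measurable_cnt_sup A (measurableSet_singleton (q - 1))

private lemma exchange (hE : ∀ i, MeasurableSet (E i)) (hindep : iIndepSet E μ)
    {A : Finset (Fin m)} {i j : Fin m} (hi : i ∉ A) (hj : j ∉ A)
    (hij : μ (E j) ≤ μ (E i)) {q : ℕ} (hq : 1 ≤ q) :
    μ {ω | q ≤ ((insert j A).filter fun x => ω ∈ E x).card} ≤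
      μ {ω | q ≤ ((insert i A).filter fun x => ω ∈ E x).card} := by
  rw [tail_insert hE hindep hj hq, tail_insert hE hindep hi hq]
  exact add_le_add_right (mul_le_mul_right hij _) _

end Aux

/-- For mutually independent events with `p_1 ≥ ... ≥ p_m`, for each `q ∈ [k]` the set
`{1,...,k}` maximizes `P(Y_q(S))` over all `k`-element subsets, where `Y_q(S)` is the
event that at least `q` of the events indexed by `S` occur. -/
theorem top_k_maximizes_tail {Ω : Type*} [MeasurableSpace Ω] (μ : Measure Ω)
    [IsProbabilityMeasure μ] {m : ℕ} (E : Fin m → Set Ω)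
    (hE : ∀ i, MeasurableSet (E i)) (hindep : iIndepSet E μ)
    (hmono : ∀ i j : Fin m, i ≤ j → μ (E j) ≤ μ (E i))
    (k : ℕ) (hk : k ≤ m)
    (q : ℕ) (hq1 : 1 ≤ q) (hqk : q ≤ k)
    (S : Finset (Fin m)) (hS : S.card = k) :
    (μ {ω | q ≤ (S.filter fun i => ω ∈ E i).card}).toReal ≤
      (μ {ω | q ≤ ((Finset.univ.filter fun i : Fin m => (i : ℕ) < k).filter
          fun i => ω ∈ E i).card}).toReal := by
  set T : Finset (Fin m) := Finset.univ.filter fun i : Fin m => (i : ℕ) < k with hTdef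
  have hTmem : ∀ i : Fin m, i ∈ T ↔ (i : ℕ) < k := by
    intro i; simp [hTdef]
  have hTcard : T.card = k := by
    have hTeq : T = (Finset.univ : Finset (Fin k)).map (Fin.castLEEmb hk) := by
      ext i
      simp only [Finset.mem_map, Finset.mem_univ, true_and, hTmem]
      constructor
      · rintro hik
        exact ⟨⟨(i : ℕ), hik⟩, Fin.ext rfl⟩
      · rintro ⟨a, rfl⟩
        simpa [Fin.castLEEmb] using a.isLt
    rw [hTeq, Finset.card_map, Finset.card_univ, Fintype.card_fin]
  -- main induction
  have main : ∀ n (S : Finset (Fin m)), S.card = k → (S \ T).card = n →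
      μ {ω | q ≤ (S.filter fun i => ω ∈ E i).card} ≤
        μ {ω | q ≤ (T.filter fun i => ω ∈ E i).card} := by
    intro n
    induction n with
    | zero =>
      intro S hSc hdiff
      have hsub : S ⊆ T := by
        rwa [Finset.card_eq_zero, Finset.sdiff_eq_empty_iff_subset] at hdiff
      have : S = T := Finset.eq_of_subset_of_card_le hsub (by rw [hSc, hTcard])
      rw [this]
    | succ n ih =>
      intro S hSc hdiff
      have hSTne : (S \ T).Nonempty := Finset.card_pos.mp (by omega)
      obtain ⟨j, hjST⟩ := hSTne
      have hjS : j ∈ S := (Finset.mem_sdiff.mp hjST).1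
      have hjT : j ∉ T := (Finset.mem_sdiff.mp hjST).2
      have hTSne : (T \ S).Nonempty := by
        rw [← Finset.card_pos, Finset.card_sdiff_comm (by rw [hTcard, hSc])]
        omega
      obtain ⟨i, hiTS⟩ := hTSne
      have hiT : i ∈ T := (Finset.mem_sdiff.mp hiTS).1
      have hiS : i ∉ S := (Finset.mem_sdiff.mp hiTS).2
      have hij : i ≤ j := by
        have h1 : (i : ℕ) < k := (hTmem i).1 hiT
        have h2 : ¬ (j : ℕ) < k := fun h => hjT ((hTmem j).2 h)
        exact Fin.le_def.mpr (by omega)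
      set A : Finset (Fin m) := S.erase j with hAdef
      have hjA : j ∉ A := Finset.notMem_erase j S
      have hiA : i ∉ A := fun h => hiS (Finset.mem_of_mem_erase h)
      have hSins : S = insert j A := (Finset.insert_erase hjS).symm
      set S' : Finset (Fin m) := insert i A with hS'def
      have hS'c : S'.card = k := by
        rw [hS'def, Finset.card_insert_of_notMem hiA, hAdef,
          Finset.card_erase_of_mem hjS, hSc]
        omega
      have hS'diff : (S' \ T).card = n := by
        have h1 : S' \ T = (S \ T).erase j := by
          ext x
          simp only [hS'def, Finset.mem_sdiff, Finset.mem_insert, Finset.mem_erase, hAdef]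
          constructor
          · rintro ⟨hx1 | hx2, hxT⟩
            · exact absurd (hx1 ▸ hiT) hxT
            · exact ⟨hx2.1, hx2.2, hxT⟩
          · rintro ⟨hxj, hxS, hxT⟩
            exact ⟨Or.inr ⟨hxj, hxS⟩, hxT⟩
        rw [h1, Finset.card_erase_of_mem hjST, hdiff]; omega
      calc μ {ω | q ≤ (S.filter fun i => ω ∈ E i).card}
          = μ {ω | q ≤ ((insert j A).filter fun i => ω ∈ E i).card} := by rw [← hSins]
        _ ≤ μ {ω | q ≤ ((insert i A).filter fun x => ω ∈ E x).card} :=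
            exchange hE hindep hiA hjA (hmono i j hij) hq1
        _ ≤ μ {ω | q ≤ (T.filter fun i => ω ∈ E i).card} := ih S' hS'c hS'diff
  exact ENNReal.toReal_mono (measure_ne_top μ _) (main (S \ T).card S hS rfl)
end

section
/- Let E_1,...,E_m be mutually independent events and S a k-element subset with r ∈ S, t ∉ S, and P(E_t) ≥ P(E_r). Then for every q ∈ [k], P(Y_q(S)) ≤ P(Y_q(S ∪ {t} \ {r})), i.e., swapping in the more probable event does not decrease the probability that at least q events occur. -/
open MeasureTheory ProbabilityTheory
open scoped Classical

/-- Swap lemma: for mutually independent events, if `r ∈ S`, `t ∉ S` and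
`P(E_t) ≥ P(E_r)`, then for every `q ∈ [k]` (with `|S| = k`),
`P(Y_q(S)) ≤ P(Y_q(S ∪ {t} \ {r}))`. -/
theorem swap_increases_tail {Ω : Type*} [MeasurableSpace Ω] (μ : Measure Ω)
    [IsProbabilityMeasure μ] {m : ℕ} (E : Fin m → Set Ω)
    (hE : ∀ i, MeasurableSet (E i)) (hindep : iIndepSet E μ)
    (k : ℕ) (S : Finset (Fin m)) (hS : S.card = k)
    (r t : Fin m) (hr : r ∈ S) (ht : t ∉ S)
    (hpt : μ (E r) ≤ μ (E t))
    (q : ℕ) (hq1 : 1 ≤ q) (hqk : q ≤ k) :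
    (μ {ω | q ≤ (S.filter fun i => ω ∈ E i).card}).toReal ≤
      (μ {ω | q ≤ ((insert t (S.erase r)).filter fun i => ω ∈ E i).card}).toReal := by
  classical
  set S' : Finset (Fin m) := S.erase r with hS'def
  have hrS' : r ∉ S' := Finset.notMem_erase r S
  have htS' : t ∉ S' := fun h => ht (Finset.mem_of_mem_erase h)
  set f : Ω → ℕ := fun ω => (S'.filter fun i => ω ∈ E i).card with hfdef
  -- the σ-algebra generated by the events indexed by S'
  have hm1le : MeasurableSpace.generateFrom {u | ∃ n ∈ (↑S' : Set (Fin m)), E n = u}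
      ≤ ‹MeasurableSpace Ω› := by
    apply MeasurableSpace.generateFrom_le
    rintro u ⟨n, -, rfl⟩
    exact hE n
  set m1 : MeasurableSpace Ω :=
    MeasurableSpace.generateFrom {u | ∃ n ∈ (↑S' : Set (Fin m)), E n = u} with hm1def
  have hf : Measurable[m1] f := by
    have hfeq : f = fun ω => ∑ i ∈ S', if ω ∈ E i then 1 else 0 := by
      funext ω; exact Finset.card_filter _ _
    rw [hfeq]
    refine Finset.measurable_sum _ (fun i hi => ?_)
    have hEi : MeasurableSet[m1] (E i) :=
      MeasurableSpace.measurableSet_generateFrom ⟨i, by exact_mod_cast hi, rfl⟩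
    exact Measurable.ite hEi measurable_const measurable_const
  have hA : MeasurableSet[m1] {ω | q ≤ f ω} := hf measurableSet_Ici
  have hB : MeasurableSet[m1] {ω | f ω = q - 1} := hf (measurableSet_singleton (q - 1))
  -- the two events refer to the same disjoint-union decomposition
  have hsplit : ∀ j : Fin m, j ∉ S' →
      {ω | q ≤ ((insert j S').filter fun i => ω ∈ E i).card}
        = {ω | q ≤ f ω} ∪ ({ω | f ω = q - 1} ∩ E j) := by
    intro j hj
    ext ω
    by_cases hωj : ω ∈ E j
    · have : ((insert j S').filter fun i => ω ∈ E i).card = f ω + 1 := by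
        rw [Finset.filter_insert, if_pos hωj,
          Finset.card_insert_of_notMem (fun h => hj (Finset.mem_of_mem_filter _ h))]
      simp only [Set.mem_setOf_eq, Set.mem_union, Set.mem_inter_iff, this, hωj, and_true]
      omega
    · have : ((insert j S').filter fun i => ω ∈ E i).card = f ω := by
        rw [Finset.filter_insert, if_neg hωj]
      simp only [Set.mem_setOf_eq, Set.mem_union, Set.mem_inter_iff, this, hωj, and_false,
        or_false]
  have hdisjAB : ∀ j : Fin m,
      Disjoint {ω | q ≤ f ω} ({ω | f ω = q - 1} ∩ E j) := by
    intro j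
    rw [Set.disjoint_left]
    rintro ω hω ⟨hω', -⟩
    simp only [Set.mem_setOf_eq] at hω hω'
    omega
  -- independence of the "count" events with E j for j ∉ S'
  have hkey : ∀ j : Fin m, j ∉ S' →
      μ {ω | q ≤ ((insert j S').filter fun i => ω ∈ E i).card}
        = μ {ω | q ≤ f ω} + μ {ω | f ω = q - 1} * μ (E j) := by
    intro j hj
    have hdisjST : Disjoint (↑S' : Set (Fin m)) ({j} : Set (Fin m)) := by
      simp only [Set.disjoint_singleton_right, Finset.mem_coe]
      exact hj
    have hindep2 := ProbabilityTheory.iIndepSet.indep_generateFrom_of_disjoint hE hindep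
      (↑S' : Set (Fin m)) ({j} : Set (Fin m)) hdisjST
    have hEj : MeasurableSet[MeasurableSpace.generateFrom
        {u | ∃ n ∈ ({j} : Set (Fin m)), E n = u}] (E j) :=
      MeasurableSpace.measurableSet_generateFrom ⟨j, Set.mem_singleton j, rfl⟩
    have hBEj : IndepSet {ω | f ω = q - 1} (E j) μ :=
      hindep2.indepSet_of_measurableSet hB hEj
    have hmul : μ ({ω | f ω = q - 1} ∩ E j) = μ {ω | f ω = q - 1} * μ (E j) :=
      hBEj.measure_inter_eq_mul
    rw [hsplit j hj,
      measure_union (hdisjAB j) ((hm1le _ hB).inter (hE j)), hmul]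
  have hSins : S = insert r S' := (Finset.insert_erase hr).symm
  have h1 : μ {ω | q ≤ (S.filter fun i => ω ∈ E i).card}
      = μ {ω | q ≤ f ω} + μ {ω | f ω = q - 1} * μ (E r) := by
    rw [hSins]; exact hkey r hrS'
  have h2 : μ {ω | q ≤ ((insert t (S.erase r)).filter fun i => ω ∈ E i).card}
      = μ {ω | q ≤ f ω} + μ {ω | f ω = q - 1} * μ (E t) := hkey t htS'
  rw [h1, h2]
  refine ENNReal.toReal_mono ?_ ?_
  · exact ENNReal.add_ne_top.mpr ⟨measure_ne_top μ _,
      ENNReal.mul_ne_top (measure_ne_top μ _) (measure_ne_top μ _)⟩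
  · exact add_le_add_right (mul_le_mul_right hpt _) _
end

section
/- Let S_L be a log-optimal k-portfolio and S_W a picking-winners-optimal k-portfolio. Suppose there exist λ ∈ [0,1) and p ∈ (0, 1/k] such that for every k-element portfolio considered, the probability of exactly any given subset T of its events occurring lies in [(1−λ)p^{|T|}(1−p)^{k−|T|}, (1+λ)p^{|T|}(1−p)^{k−|T|}]. Then (U(S_W) − U(S_L)) / U(S_W) ≤ 2ζ(3)λkp(1−p) / ( ln(1 + (b−a)/(ka)) · (1−λ) · (1 − (1−p)^k) ). -/
open MeasureTheory
open scoped Classical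

namespace PWAux

variable {Ω : Type*} [MeasurableSpace Ω] {m : ℕ}

/-- the event that exactly the events indexed by `T` (among those in `S`) occur -/
def piece (E : Fin m → Set Ω) (S T : Finset (Fin m)) : Set Ω :=
  (⋂ i ∈ T, E i) ∩ (⋂ i ∈ S \ T, (E i)ᶜ)

lemma piece_meas {E : Fin m → Set Ω} (hE : ∀ i, MeasurableSet (E i)) (S T : Finset (Fin m)) :
    MeasurableSet (piece E S T) :=
  (MeasurableSet.biInter (Set.to_countable _) fun i _ => hE i).inter
    (MeasurableSet.biInter (Set.to_countable _) fun i _ => (hE i).compl)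

lemma mem_piece_filter (E : Fin m → Set Ω) (S : Finset (Fin m)) (ω : Ω) :
    ω ∈ piece E S (S.filter fun i => ω ∈ E i) := by
  refine ⟨?_, ?_⟩
  · simp only [Set.mem_iInter, Finset.mem_filter]
    exact fun i hi => hi.2
  · simp only [Set.mem_iInter, Finset.mem_sdiff, Finset.mem_filter, Set.mem_compl_iff]
    exact fun i hi h => hi.2 ⟨hi.1, h⟩

lemma eq_filter_of_mem_piece {E : Fin m → Set Ω} {S T : Finset (Fin m)} (hT : T ⊆ S) {ω : Ω}
    (hω : ω ∈ piece E S T) : T = S.filter fun i => ω ∈ E i := by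
  obtain ⟨h1, h2⟩ := hω
  simp only [Set.mem_iInter] at h1 h2
  ext i
  simp only [Finset.mem_filter]
  constructor
  · exact fun hi => ⟨hT hi, h1 i hi⟩
  · rintro ⟨hiS, hiE⟩
    by_contra hiT
    exact h2 i (Finset.mem_sdiff.mpr ⟨hiS, hiT⟩) hiE

lemma piece_disjoint {E : Fin m → Set Ω} {S T T' : Finset (Fin m)} (hT : T ⊆ S) (hT' : T' ⊆ S)
    (hne : T ≠ T') : Disjoint (piece E S T) (piece E S T') :=
  Set.disjoint_left.mpr fun ω h h' =>
    hne ((eq_filter_of_mem_piece hT h).trans (eq_filter_of_mem_piece hT' h').symm)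

lemma sum_piece_toReal (μ : Measure Ω) [IsFiniteMeasure μ] {E : Fin m → Set Ω}
    (hE : ∀ i, MeasurableSet (E i)) (S : Finset (Fin m)) (F : Finset (Finset (Fin m)))
    (hF : F ⊆ S.powerset) :
    ∑ T ∈ F, (μ (piece E S T)).toReal = (μ (⋃ T ∈ F, piece E S T)).toReal := by
  have hdisj : (F : Set (Finset (Fin m))).PairwiseDisjoint (piece E S) := fun T hT T' hT' hne =>
    piece_disjoint (Finset.mem_powerset.mp (hF hT)) (Finset.mem_powerset.mp (hF hT')) hne
  rw [measure_biUnion_finset hdisj fun T _ => piece_meas hE S T]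
  exact (ENNReal.toReal_sum fun T _ => measure_ne_top μ _).symm

lemma iUnion_piece (E : Fin m → Set Ω) (S : Finset (Fin m)) :
    ⋃ T ∈ S.powerset, piece E S T = Set.univ := by
  ext ω
  simp only [Set.mem_iUnion, Set.mem_univ, iff_true]
  exact ⟨S.filter fun i => ω ∈ E i, Finset.mem_powerset.mpr (Finset.filter_subset _ _),
    mem_piece_filter E S ω⟩

lemma total_piece (μ : Measure Ω) [IsProbabilityMeasure μ] {E : Fin m → Set Ω}
    (hE : ∀ i, MeasurableSet (E i)) (S : Finset (Fin m)) :
    ∑ T ∈ S.powerset, (μ (piece E S T)).toReal = 1 := by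
  rw [sum_piece_toReal μ hE S _ subset_rfl, iUnion_piece, measure_univ, ENNReal.toReal_one]

lemma union_eq (E : Fin m → Set Ω) (S : Finset (Fin m)) :
    (⋃ i ∈ S, E i) = ⋃ T ∈ S.powerset.filter Finset.Nonempty, piece E S T := by
  ext ω
  simp only [Set.mem_iUnion, Finset.mem_filter, Finset.mem_powerset]
  constructor
  · rintro ⟨i, hiS, hiE⟩
    exact ⟨S.filter fun j => ω ∈ E j, ⟨Finset.filter_subset _ _,
      ⟨i, Finset.mem_filter.mpr ⟨hiS, hiE⟩⟩⟩, mem_piece_filter E S ω⟩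
  · rintro ⟨T, ⟨hTS, i, hiT⟩, hω⟩
    have := hω.1
    simp only [Set.mem_iInter] at this
    exact ⟨i, hTS hiT, this i hiT⟩

lemma U_eq (μ : Measure Ω) [IsProbabilityMeasure μ] {E : Fin m → Set Ω}
    (hE : ∀ i, MeasurableSet (E i)) (S : Finset (Fin m)) :
    (μ (⋃ i ∈ S, E i)).toReal
      = ∑ T ∈ S.powerset.filter Finset.Nonempty, (μ (piece E S T)).toReal := by
  rw [union_eq E S, sum_piece_toReal μ hE S _ (Finset.filter_subset _ _)]

lemma sum_ite_on_piece {E : Fin m → Set Ω} {S T : Finset (Fin m)} (hT : T ⊆ S) {ω : Ω}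
    (hω : ω ∈ piece E S T) (a b : ℝ) :
    ∑ i ∈ S, (if ω ∈ E i then b else a) = (T.card : ℝ) * b + ((S \ T).card : ℝ) * a := by
  obtain ⟨h1, h2⟩ := hω
  simp only [Set.mem_iInter, Set.mem_compl_iff] at h1 h2
  rw [← Finset.sum_sdiff hT, Finset.sum_congr rfl fun i hi => if_neg (h2 i hi),
    Finset.sum_congr rfl fun i hi => if_pos (h1 i hi), Finset.sum_const, Finset.sum_const,
    nsmul_eq_mul, nsmul_eq_mul]
  ring

lemma integral_eq (μ : Measure Ω) [IsProbabilityMeasure μ] {E : Fin m → Set Ω}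
    (hE : ∀ i, MeasurableSet (E i)) (S : Finset (Fin m)) (a b : ℝ) :
    ∫ ω, Real.log ((∑ i ∈ S, (if ω ∈ E i then b else a)) / (S.card : ℝ)) ∂μ =
      ∑ T ∈ S.powerset, (μ (piece E S T)).toReal *
        Real.log (((T.card : ℝ) * b + ((S \ T).card : ℝ) * a) / (S.card : ℝ)) := by
  have hfun : ∀ ω, Real.log ((∑ i ∈ S, (if ω ∈ E i then b else a)) / (S.card : ℝ)) =
      ∑ T ∈ S.powerset, (piece E S T).indicator
        (fun _ => Real.log (((T.card : ℝ) * b + ((S \ T).card : ℝ) * a) / (S.card : ℝ))) ω := by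
    intro ω
    have hmem : (S.filter fun i => ω ∈ E i) ∈ S.powerset :=
      Finset.mem_powerset.mpr (Finset.filter_subset _ _)
    rw [Finset.sum_eq_single_of_mem _ hmem]
    · rw [Set.indicator_of_mem (mem_piece_filter E S ω),
        sum_ite_on_piece (Finset.filter_subset _ _) (mem_piece_filter E S ω)]
    · intro T hT hne
      exact Set.indicator_of_notMem
        (fun hω => hne (eq_filter_of_mem_piece (Finset.mem_powerset.mp hT) hω)) _
  rw [MeasureTheory.integral_congr_ae (Filter.Eventually.of_forall hfun),
    MeasureTheory.integral_finset_sum _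
      (fun T _ => (integrable_const _).indicator (piece_meas hE S T))]
  refine Finset.sum_congr rfl fun T _ => ?_
  rw [MeasureTheory.integral_indicator_const _ (piece_meas hE S T), smul_eq_mul, measureReal_def, mul_comm]

/-! combinatorial lemmas -/

lemma sum_powerset_card {ι : Type*} (S : Finset ι) (F : ℕ → ℝ) :
    ∑ T ∈ S.powerset, F T.card
      = ∑ j ∈ Finset.range (S.card + 1), (S.card.choose j : ℝ) * F j := by
  rw [Finset.sum_powerset]
  refine Finset.sum_congr rfl fun j hj => ?_
  rw [Finset.sum_congr rfl (fun T hT => by rw [(Finset.mem_powersetCard.mp hT).2]),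
    Finset.sum_const, Finset.card_powersetCard, nsmul_eq_mul]

lemma sum_powerset_filter_card {ι : Type*} (S : Finset ι) (F : ℕ → ℝ) :
    ∑ T ∈ S.powerset.filter Finset.Nonempty, F T.card
      = ∑ j ∈ Finset.range (S.card + 1),
          (S.card.choose j : ℝ) * (if j = 0 then 0 else F j) := by
  rw [← sum_powerset_card S (fun j => if j = 0 then 0 else F j), Finset.sum_filter]
  refine Finset.sum_congr rfl fun T _ => ?_
  by_cases hT : T.Nonempty
  · rw [if_pos hT, if_neg (Nat.pos_iff_ne_zero.mp (Finset.card_pos.mpr hT))]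
  · rw [if_neg hT, if_pos]
    rw [Finset.not_nonempty_iff_eq_empty] at hT
    simp [hT]

lemma shift_if_sum (n : ℕ) (g : ℕ → ℝ) :
    ∑ j ∈ Finset.range (n + 1), (if j = 0 then 0 else g j)
      = ∑ j ∈ Finset.range (n + 1), g j - g 0 := by
  rw [Finset.sum_range_succ', Finset.sum_range_succ']
  simp

lemma binom_sum (p : ℝ) (k : ℕ) :
    ∑ j ∈ Finset.range (k + 1), (k.choose j : ℝ) * (p ^ j * (1 - p) ^ (k - j)) = 1 := by
  have h := add_pow p (1 - p) k
  have h2 : ∑ j ∈ Finset.range (k + 1), (k.choose j : ℝ) * (p ^ j * (1 - p) ^ (k - j))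
      = ∑ j ∈ Finset.range (k + 1), p ^ j * (1 - p) ^ (k - j) * (k.choose j : ℝ) :=
    Finset.sum_congr rfl fun j _ => by ring
  rw [h2, ← h]
  norm_num

lemma binom_mean (p : ℝ) (k : ℕ) :
    ∑ j ∈ Finset.range (k + 1 + 1), ((k + 1).choose j : ℝ) * (j : ℝ)
        * (p ^ j * (1 - p) ^ (k + 1 - j)) = (k + 1 : ℝ) * p := by
  rw [Finset.sum_range_succ']
  have key : ∀ j ∈ Finset.range (k + 1),
      ((k + 1).choose (j + 1) : ℝ) * ((j + 1 : ℕ) : ℝ)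
          * (p ^ (j + 1) * (1 - p) ^ (k + 1 - (j + 1)))
        = ((k : ℝ) + 1) * p * ((k.choose j : ℝ) * (p ^ j * (1 - p) ^ (k - j))) := by
    intro j _
    have h2 : ((k + 1).choose (j + 1) : ℝ) * ((j + 1 : ℕ) : ℝ)
        = ((k : ℝ) + 1) * (k.choose j : ℝ) := by
      have := Nat.add_one_mul_choose_eq k j
      exact_mod_cast (congrArg (fun n : ℕ => (n : ℝ)) this).symm
    rw [Nat.succ_sub_succ, h2, pow_succ]
    ring
  rw [Finset.sum_congr rfl key, ← Finset.mul_sum, binom_sum p k]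
  simp

lemma bonferroni (p : ℝ) (hp0 : 0 ≤ p) (hp1 : p ≤ 1) :
    ∀ k : ℕ, (1 - p) ^ k ≤ 1 - (k : ℝ) * p + (k : ℝ) * ((k : ℝ) - 1) / 2 * p ^ 2 := by
  intro k
  induction k with
  | zero => norm_num
  | succ n ih =>
    have hq : (0 : ℝ) ≤ 1 - p := by linarith
    have h3 : (1 - p) * (1 - p) ^ n
        ≤ (1 - p) * (1 - (n : ℝ) * p + (n : ℝ) * ((n : ℝ) - 1) / 2 * p ^ 2) :=
      mul_le_mul_of_nonneg_left ih hq
    have hn : (0 : ℝ) ≤ (n : ℝ) * ((n : ℝ) - 1) := by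
      rcases Nat.eq_zero_or_pos n with h | h
      · simp [h]
      · have h1 : (1 : ℝ) ≤ (n : ℝ) := by exact_mod_cast h
        nlinarith
    have hps : (1 - p) ^ (n + 1) = (1 - p) * (1 - p) ^ n := by ring
    push_cast
    nlinarith [mul_nonneg hn (pow_nonneg hp0 3)]

lemma zeta3_ge_one : (1 : ℝ) ≤ ∑' n : ℕ, 1 / ((n : ℝ) + 1) ^ 3 := by
  have hs : Summable (fun n : ℕ => 1 / ((n : ℝ) + 1) ^ 3) := by
    have h1 : Summable (fun n : ℕ => 1 / (n : ℝ) ^ 3) :=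
      Real.summable_one_div_nat_pow.mpr (by norm_num)
    have h2 := (summable_nat_add_iff 1).mpr h1
    refine h2.congr fun n => ?_
    push_cast
    ring
  have h0 := Summable.le_tsum hs 0 (fun i _ => by positivity)
  simpa using h0

/-- the per-event excess log-return `ln(1 + j x)` -/
noncomputable def hfun (x : ℝ) (j : ℕ) : ℝ := Real.log (1 + (j : ℝ) * x)

lemma hfun_zero (x : ℝ) : hfun x 0 = 0 := by simp [hfun]

lemma hfun_one (x : ℝ) : hfun x 1 = Real.log (1 + x) := by simp [hfun]

lemma hfun_mono {x : ℝ} (hx : 0 < x) {j : ℕ} (hj : 1 ≤ j) : hfun x 1 ≤ hfun x j := by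
  have hj1 : (1 : ℝ) ≤ (j : ℝ) := by exact_mod_cast hj
  apply Real.log_le_log (by push_cast; nlinarith)
  push_cast
  nlinarith

lemma hfun_ub {x : ℝ} (hx : 0 < x) {j : ℕ} (hj : 1 ≤ j) :
    hfun x j - hfun x 1 ≤ (j : ℝ) - 1 := by
  have hj1 : (1 : ℝ) ≤ (j : ℝ) := by exact_mod_cast hj
  have h2 : hfun x j ≤ Real.log ((j : ℝ) * (1 + x)) := by
    apply Real.log_le_log (by nlinarith)
    nlinarith
  rw [Real.log_mul (by linarith) (by nlinarith)] at h2
  have h3 : Real.log (j : ℝ) ≤ (j : ℝ) - 1 := Real.log_le_sub_one_of_pos (by linarith)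
  rw [hfun_one]
  unfold hfun at h2 ⊢
  linarith

lemma Dk_bound (p : ℝ) (k : ℕ) (hk : 1 ≤ k) (hp : 0 < p) (hp1 : p ≤ 1)
    (hkp : (k : ℝ) * p ≤ 1) (φ : ℕ → ℝ) (hφ : ∀ j : ℕ, 1 ≤ j → φ j ≤ (j : ℝ) - 1) :
    ∑ j ∈ Finset.range (k + 1), (k.choose j : ℝ) *
        (if j = 0 then 0 else (p ^ j * (1 - p) ^ (k - j)) * φ j)
      ≤ (k : ℝ) * p * (1 - p) / 2 := by
  have hq0 : (0 : ℝ) ≤ 1 - p := by linarith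
  have hstep : ∀ j ∈ Finset.range (k + 1), (k.choose j : ℝ) *
        (if j = 0 then 0 else (p ^ j * (1 - p) ^ (k - j)) * φ j)
      ≤ (if j = 0 then 0 else (k.choose j : ℝ) * (p ^ j * (1 - p) ^ (k - j)) * ((j : ℝ) - 1)) := by
    intro j _
    by_cases hj : j = 0
    · simp [hj]
    · rw [if_neg hj, if_neg hj]
      have hj1 : 1 ≤ j := Nat.one_le_iff_ne_zero.mpr hj
      have hμ : (0 : ℝ) ≤ (k.choose j : ℝ) * (p ^ j * (1 - p) ^ (k - j)) := by positivity
      calc (k.choose j : ℝ) * ((p ^ j * (1 - p) ^ (k - j)) * φ j)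
          = ((k.choose j : ℝ) * (p ^ j * (1 - p) ^ (k - j))) * φ j := by ring
        _ ≤ ((k.choose j : ℝ) * (p ^ j * (1 - p) ^ (k - j))) * ((j : ℝ) - 1) :=
            mul_le_mul_of_nonneg_left (hφ j hj1) hμ
        _ = (k.choose j : ℝ) * (p ^ j * (1 - p) ^ (k - j)) * ((j : ℝ) - 1) := by ring
  refine le_trans (Finset.sum_le_sum hstep) ?_
  obtain ⟨k', rfl⟩ : ∃ k', k = k' + 1 := ⟨k - 1, by omega⟩
  rw [shift_if_sum]
  have hsub : ∑ j ∈ Finset.range (k' + 1 + 1),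
        ((k' + 1).choose j : ℝ) * (p ^ j * (1 - p) ^ (k' + 1 - j)) * ((j : ℝ) - 1)
      = ∑ j ∈ Finset.range (k' + 1 + 1),
          (((k' + 1).choose j : ℝ) * (j : ℝ) * (p ^ j * (1 - p) ^ (k' + 1 - j))
            - ((k' + 1).choose j : ℝ) * (p ^ j * (1 - p) ^ (k' + 1 - j))) :=
    Finset.sum_congr rfl fun j _ => by ring
  rw [hsub, Finset.sum_sub_distrib, binom_mean, binom_sum]
  simp only [Nat.choose_zero_right, Nat.cast_one, pow_zero, one_mul, Nat.sub_zero,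
    Nat.cast_zero, Nat.cast_ofNat, Nat.cast_add]
  have hb := bonferroni p hp.le hp1 (k' + 1)
  have hc0 : (0 : ℝ) ≤ ((k' : ℝ) + 1) * p := by positivity
  have h5 : ((k' : ℝ) + 1) * p * (((k' : ℝ) + 1 - 1) * p) ≤ ((k' : ℝ) + 1) * p * (1 - p) := by
    apply mul_le_mul_of_nonneg_left _ hc0
    push_cast at hkp
    linarith
  push_cast at hb ⊢
  nlinarith [hb, h5]

end PWAux

set_option maxHeartbeats 2000000 in
/-- Main comparison theorem: under the dependency assumption with parameters
`λ ∈ [0,1)` and `p ∈ (0,1/k]`, the picking-winners-optimal portfolio `S_W` and the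
log-optimal portfolio `S_L` satisfy
`(U(S_W) - U(S_L)) / U(S_W) ≤ 2ζ(3)λkp(1-p) / (ln(1+(b-a)/(ka))(1-λ)(1-(1-p)^k))`. -/
theorem picking_winners_vs_log_optimal {Ω : Type*} [MeasurableSpace Ω] (μ : Measure Ω)
    [IsProbabilityMeasure μ] {m : ℕ} (E : Fin m → Set Ω)
    (hE : ∀ i, MeasurableSet (E i))
    (a b : ℝ) (ha : 0 < a) (hab : a < b)
    (k : ℕ) (hk : 1 ≤ k) (hkm : k ≤ m)
    (lam p : ℝ) (hlam : lam ∈ Set.Ico (0 : ℝ) 1) (hp : 0 < p) (hpk : p ≤ 1 / k)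
    (hdep : ∀ S : Finset (Fin m), S.card = k → ∀ T ⊆ S, T.Nonempty →
      (1 - lam) * p ^ T.card * (1 - p) ^ (k - T.card) ≤
          (μ ((⋂ i ∈ T, E i) ∩ (⋂ i ∈ S \ T, (E i)ᶜ))).toReal ∧
        (μ ((⋂ i ∈ T, E i) ∩ (⋂ i ∈ S \ T, (E i)ᶜ))).toReal ≤
          (1 + lam) * p ^ T.card * (1 - p) ^ (k - T.card))
    (SW SL : Finset (Fin m)) (hSW : SW.card = k) (hSL : SL.card = k)
    (hSWopt : ∀ S : Finset (Fin m), S.card = k →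
      (μ (⋃ i ∈ S, E i)).toReal ≤ (μ (⋃ i ∈ SW, E i)).toReal)
    (hSLopt : ∀ S : Finset (Fin m), S.card = k →
      (∫ ω, Real.log ((∑ i ∈ S, (if ω ∈ E i then b else a)) / k) ∂μ) ≤
        ∫ ω, Real.log ((∑ i ∈ SL, (if ω ∈ E i then b else a)) / k) ∂μ) :
    ((μ (⋃ i ∈ SW, E i)).toReal - (μ (⋃ i ∈ SL, E i)).toReal) /
        (μ (⋃ i ∈ SW, E i)).toReal ≤
      2 * (∑' n : ℕ, 1 / ((n : ℝ) + 1) ^ 3) * lam * k * p * (1 - p) /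
        (Real.log (1 + (b - a) / (k * a)) * (1 - lam) * (1 - (1 - p) ^ k)) := by
  classical
  obtain ⟨hlam0, hlam1⟩ := hlam
  have hk0 : (0 : ℝ) < k := by exact_mod_cast hk
  have hkp1 : (k : ℝ) * p ≤ 1 := by
    rw [le_div_iff₀ hk0] at hpk
    calc (k : ℝ) * p = p * (k : ℝ) := mul_comm _ _
      _ ≤ 1 := hpk
  have hk1 : (1 : ℝ) ≤ (k : ℝ) := by exact_mod_cast hk
  have hp1 : p ≤ 1 := by nlinarith [mul_le_mul_of_nonneg_left hk1 hp.le]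
  have hq0 : (0 : ℝ) ≤ 1 - p := by linarith
  have hqk1 : (1 - p) ^ k < 1 := pow_lt_one₀ hq0 (by linarith) (by omega)
  have hQ : 0 < 1 - (1 - p) ^ k := by linarith
  have hlam1' : 0 < 1 - lam := by linarith
  set x : ℝ := (b - a) / (↑k * a) with hxdef
  have hx0 : 0 < x := by
    rw [hxdef]
    apply div_pos (by linarith)
    positivity
  have hposj : ∀ j : ℕ, (0 : ℝ) < 1 + (j : ℝ) * x := fun j => by positivity
  have h1pos : 0 < Real.log (1 + x) := Real.log_pos (by linarith)
  set h1 : ℝ := Real.log (1 + x) with hh1def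
  have hub : ∀ j : ℕ, 1 ≤ j → PWAux.hfun x j - h1 ≤ (j : ℝ) - 1 := by
    intro j hj
    rw [hh1def, ← PWAux.hfun_one]
    exact PWAux.hfun_ub hx0 hj
  have hmono : ∀ j : ℕ, 1 ≤ j → h1 ≤ PWAux.hfun x j := by
    intro j hj
    rw [hh1def, ← PWAux.hfun_one]
    exact PWAux.hfun_mono hx0 hj
  -- measure quantities
  set UW := (μ (⋃ i ∈ SW, E i)).toReal with hUWdef
  set UL := (μ (⋃ i ∈ SL, E i)).toReal with hULdef
  have hUW : UW = ∑ T ∈ SW.powerset.filter Finset.Nonempty, (μ (PWAux.piece E SW T)).toReal :=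
    PWAux.U_eq μ hE SW
  have hUL : UL = ∑ T ∈ SL.powerset.filter Finset.Nonempty, (μ (PWAux.piece E SL T)).toReal :=
    PWAux.U_eq μ hE SL
  -- integral representation
  have hIntRep : ∀ S : Finset (Fin m), S.card = k →
      (∫ ω, Real.log ((∑ i ∈ S, (if ω ∈ E i then b else a)) / (k : ℝ)) ∂μ)
        = Real.log a
            + ∑ T ∈ S.powerset, (μ (PWAux.piece E S T)).toReal * PWAux.hfun x T.card := by
    intro S hS
    have hInt := PWAux.integral_eq μ hE S a b
    rw [hS] at hInt
    rw [hInt]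
    have hconv : ∀ T ∈ S.powerset,
        (μ (PWAux.piece E S T)).toReal *
          Real.log (((T.card : ℝ) * b + (((S \ T).card : ℕ) : ℝ) * a) / (k : ℝ))
        = (μ (PWAux.piece E S T)).toReal * (Real.log a + PWAux.hfun x T.card) := by
      intro T hT
      rw [Finset.mem_powerset] at hT
      have hTk : T.card ≤ k := hS ▸ Finset.card_le_card hT
      have hcard : (((S \ T).card : ℕ) : ℝ) = (k : ℝ) - (T.card : ℝ) := by
        rw [Finset.card_sdiff_of_subset hT, hS, Nat.cast_sub hTk]
      have hkne : (k : ℝ) ≠ 0 := ne_of_gt hk0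
      have hane : a ≠ 0 := ne_of_gt ha
      have harg : ((T.card : ℝ) * b + ((k : ℝ) - (T.card : ℝ)) * a) / (k : ℝ)
          = a * (1 + (T.card : ℝ) * x) := by
        rw [hxdef]
        field_simp
        ring
      rw [hcard, harg, Real.log_mul hane (ne_of_gt (hposj T.card))]
      rfl
    rw [Finset.sum_congr rfl hconv]
    have hsplit : ∑ T ∈ S.powerset,
        (μ (PWAux.piece E S T)).toReal * (Real.log a + PWAux.hfun x T.card)
        = Real.log a * (∑ T ∈ S.powerset, (μ (PWAux.piece E S T)).toReal)
          + ∑ T ∈ S.powerset, (μ (PWAux.piece E S T)).toReal * PWAux.hfun x T.card := by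
      rw [Finset.mul_sum, ← Finset.sum_add_distrib]
      exact Finset.sum_congr rfl fun T _ => by ring
    rw [hsplit, PWAux.total_piece μ hE S, mul_one]
  -- drop the empty set from the A-sums
  have hdrop : ∀ S : Finset (Fin m),
      ∑ T ∈ S.powerset, (μ (PWAux.piece E S T)).toReal * PWAux.hfun x T.card
        = ∑ T ∈ S.powerset.filter Finset.Nonempty,
            (μ (PWAux.piece E S T)).toReal * PWAux.hfun x T.card := by
    intro S
    symm
    apply Finset.sum_filter_of_ne
    intro T _ hne
    by_contra hno
    rw [Finset.not_nonempty_iff_eq_empty] at hno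
    apply hne
    rw [hno]
    simp [PWAux.hfun_zero]
  -- V-optimality gives A(SW) ≤ A(SL)
  have hopt := hSLopt SW hSW
  rw [hIntRep SW hSW, hIntRep SL hSL] at hopt
  have hAle : ∑ T ∈ SW.powerset.filter Finset.Nonempty,
        (μ (PWAux.piece E SW T)).toReal * PWAux.hfun x T.card
      ≤ ∑ T ∈ SL.powerset.filter Finset.Nonempty,
          (μ (PWAux.piece E SL T)).toReal * PWAux.hfun x T.card := by
    rw [← hdrop SW, ← hdrop SL]
    linarith
  -- decomposition of the A-sums
  have hdecW : ∑ T ∈ SW.powerset.filter Finset.Nonempty,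
        (μ (PWAux.piece E SW T)).toReal * PWAux.hfun x T.card
      = h1 * UW + ∑ T ∈ SW.powerset.filter Finset.Nonempty,
          (μ (PWAux.piece E SW T)).toReal * (PWAux.hfun x T.card - h1) := by
    rw [hUW, Finset.mul_sum, ← Finset.sum_add_distrib]
    exact Finset.sum_congr rfl fun T _ => by ring
  have hdecL : ∑ T ∈ SL.powerset.filter Finset.Nonempty,
        (μ (PWAux.piece E SL T)).toReal * PWAux.hfun x T.card
      = h1 * UL + ∑ T ∈ SL.powerset.filter Finset.Nonempty,
          (μ (PWAux.piece E SL T)).toReal * (PWAux.hfun x T.card - h1) := by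
    rw [hUL, Finset.mul_sum, ← Finset.sum_add_distrib]
    exact Finset.sum_congr rfl fun T _ => by ring
  -- grouped binomial sums
  set Dk : ℝ := ∑ j ∈ Finset.range (k + 1), (k.choose j : ℝ) *
      (if j = 0 then 0 else (p ^ j * (1 - p) ^ (k - j)) * (PWAux.hfun x j - h1)) with hDkdef
  have hgroup : ∀ S : Finset (Fin m), S.card = k →
      ∑ T ∈ S.powerset.filter Finset.Nonempty,
          (p ^ T.card * (1 - p) ^ (k - T.card)) * (PWAux.hfun x T.card - h1) = Dk := by
    intro S hS
    have := PWAux.sum_powerset_filter_card S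
      (fun j => (p ^ j * (1 - p) ^ (k - j)) * (PWAux.hfun x j - h1))
    rw [hS] at this
    exact this
  -- bounds on the deviation sums
  have hL : ∑ T ∈ SL.powerset.filter Finset.Nonempty,
        (μ (PWAux.piece E SL T)).toReal * (PWAux.hfun x T.card - h1)
      ≤ (1 + lam) * Dk := by
    rw [← hgroup SL hSL, Finset.mul_sum]
    apply Finset.sum_le_sum
    intro T hT
    rw [Finset.mem_filter, Finset.mem_powerset] at hT
    have hb := (hdep SL hSL T hT.1 hT.2).2
    have hge : 0 ≤ PWAux.hfun x T.card - h1 :=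
      sub_nonneg.mpr (hmono T.card (Finset.card_pos.mpr hT.2))
    calc (μ (PWAux.piece E SL T)).toReal * (PWAux.hfun x T.card - h1)
        ≤ ((1 + lam) * p ^ T.card * (1 - p) ^ (k - T.card)) * (PWAux.hfun x T.card - h1) :=
          mul_le_mul_of_nonneg_right hb hge
      _ = (1 + lam) * ((p ^ T.card * (1 - p) ^ (k - T.card)) * (PWAux.hfun x T.card - h1)) := by
          ring
  have hW : (1 - lam) * Dk
      ≤ ∑ T ∈ SW.powerset.filter Finset.Nonempty,
          (μ (PWAux.piece E SW T)).toReal * (PWAux.hfun x T.card - h1) := by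
    rw [← hgroup SW hSW, Finset.mul_sum]
    apply Finset.sum_le_sum
    intro T hT
    rw [Finset.mem_filter, Finset.mem_powerset] at hT
    have hb := (hdep SW hSW T hT.1 hT.2).1
    have hge : 0 ≤ PWAux.hfun x T.card - h1 :=
      sub_nonneg.mpr (hmono T.card (Finset.card_pos.mpr hT.2))
    calc (1 - lam) * ((p ^ T.card * (1 - p) ^ (k - T.card)) * (PWAux.hfun x T.card - h1))
        = ((1 - lam) * p ^ T.card * (1 - p) ^ (k - T.card)) * (PWAux.hfun x T.card - h1) := by
          ring
      _ ≤ (μ (PWAux.piece E SW T)).toReal * (PWAux.hfun x T.card - h1) :=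
          mul_le_mul_of_nonneg_right hb hge
  have hkey : h1 * UW - h1 * UL ≤ 2 * lam * Dk := by linarith
  -- bound on Dk
  have hDk : Dk ≤ (k : ℝ) * p * (1 - p) / 2 := by
    rw [hDkdef]
    exact PWAux.Dk_bound p k hk hp hp1 hkp1 _ hub
  have hfinal1 : h1 * (UW - UL) ≤ lam * ((k : ℝ) * p * (1 - p)) :=
    calc h1 * (UW - UL) = h1 * UW - h1 * UL := by ring
      _ ≤ 2 * lam * Dk := hkey
      _ ≤ 2 * lam * ((k : ℝ) * p * (1 - p) / 2) :=
          mul_le_mul_of_nonneg_left hDk (by linarith)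
      _ = lam * ((k : ℝ) * p * (1 - p)) := by ring
  -- lower bound on UW
  have hμsum : ∑ T ∈ SW.powerset.filter Finset.Nonempty,
      (p ^ T.card * (1 - p) ^ (k - T.card)) = 1 - (1 - p) ^ k := by
    have := PWAux.sum_powerset_filter_card SW (fun j => p ^ j * (1 - p) ^ (k - j))
    rw [hSW] at this
    rw [this]
    have hrw : ∀ j ∈ Finset.range (k + 1),
        (k.choose j : ℝ) * (if j = 0 then 0 else p ^ j * (1 - p) ^ (k - j))
          = (if j = 0 then 0 else (k.choose j : ℝ) * (p ^ j * (1 - p) ^ (k - j))) := by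
      intro j _
      by_cases hj : j = 0 <;> simp [hj]
    rw [Finset.sum_congr rfl hrw, PWAux.shift_if_sum, PWAux.binom_sum]
    simp
  have hUWlb : (1 - lam) * (1 - (1 - p) ^ k) ≤ UW := by
    rw [hUW, ← hμsum, Finset.mul_sum]
    apply Finset.sum_le_sum
    intro T hT
    rw [Finset.mem_filter, Finset.mem_powerset] at hT
    have hb := (hdep SW hSW T hT.1 hT.2).1
    calc (1 - lam) * (p ^ T.card * (1 - p) ^ (k - T.card))
        = (1 - lam) * p ^ T.card * (1 - p) ^ (k - T.card) := by ring
      _ ≤ (μ (PWAux.piece E SW T)).toReal := hb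
  have hUW0 : 0 < UW := lt_of_lt_of_le (mul_pos hlam1' hQ) hUWlb
  have hd0 : 0 ≤ UW - UL := sub_nonneg.mpr (hSWopt SL hSL)
  -- final arithmetic
  have hden : 0 < h1 * (1 - lam) * (1 - (1 - p) ^ k) := mul_pos (mul_pos h1pos hlam1') hQ
  rw [div_le_div_iff₀ hUW0 hden]
  set ζ : ℝ := ∑' n : ℕ, 1 / ((n : ℝ) + 1) ^ 3 with hζdef
  have hζ : 1 ≤ ζ := PWAux.zeta3_ge_one
  have hN0 : 0 ≤ lam * ((k : ℝ) * p * (1 - p)) :=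
    mul_nonneg hlam0 (mul_nonneg (mul_nonneg hk0.le hp.le) hq0)
  have hc0 : 0 ≤ (1 - lam) * (1 - (1 - p) ^ k) := (mul_pos hlam1' hQ).le
  have h2ζ : 0 ≤ 2 * ζ * (lam * ((k : ℝ) * p * (1 - p))) := by nlinarith
  calc (UW - UL) * (h1 * (1 - lam) * (1 - (1 - p) ^ k))
      = (h1 * (UW - UL)) * ((1 - lam) * (1 - (1 - p) ^ k)) := by ring
    _ ≤ (lam * ((k : ℝ) * p * (1 - p))) * ((1 - lam) * (1 - (1 - p) ^ k)) :=
        mul_le_mul_of_nonneg_right hfinal1 hc0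
    _ ≤ (2 * ζ * (lam * ((k : ℝ) * p * (1 - p)))) * ((1 - lam) * (1 - (1 - p) ^ k)) := by
        nlinarith [mul_nonneg (mul_nonneg (by linarith : (0:ℝ) ≤ 2 * ζ - 1) hN0) hc0]
    _ ≤ (2 * ζ * (lam * ((k : ℝ) * p * (1 - p)))) * UW := mul_le_mul_of_nonneg_left hUWlb h2ζ
    _ = 2 * ζ * lam * (k : ℝ) * p * (1 - p) * UW := by ring
end
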